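/- Let n > 1 and let f be a Littlewood polynomial of length n drawn uniformly at random. Then Var(‖f‖₄⁴) = (16/3)n³ - 20n² + (56/3)n - 2 + 2(-1)ⁿ. -/

import Mathlib

set_option maxHeartbeats 1600000

open MeasureTheory

/-- The fourth power of the `L₄` norm of `f(z) = ∑_{j<n} a_j z^j` on the unit circle. -/
noncomputable def L4pow4 (n : ℕ) (a : ℕ → ℝ) : ℝ :=
  (1 / (2 * Real.pi)) * ∫ θ in (0:ℝ)..(2 * Real.pi),
    (‖∑ j ∈ Finset.range n, (a j : ℂ) * Complex.exp ((θ : ℂ) * Complex.I) ^ j‖) ^ 4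

/-- Extend a ±1 coefficient vector indexed by `Fin n` (given as Booleans) to `ℕ → ℝ`. -/
def signs (n : ℕ) (a : Fin n → Bool) : ℕ → ℝ :=
  fun j => if h : j < n then (if a ⟨j, h⟩ then 1 else -1) else 0


open Finset

noncomputable def acorr (n d : ℕ) (x : ℕ → ℝ) : ℝ :=
  ∑ j ∈ Finset.range (n - d), x j * x (j + d)

noncomputable def quadSum (n : ℕ) (x : ℕ → ℝ) : ℝ :=
  ∑ j ∈ range n, ∑ k ∈ range n, ∑ l ∈ range n, ∑ m ∈ range n,
    if j + l = k + m then x j * x k * x l * x m else 0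

lemma signs_lt {n : ℕ} (a : Fin n → Bool) {j : ℕ} (h : j < n) :
    signs n a j = if a ⟨j, h⟩ then 1 else -1 := by
  simp [signs, h]

/-- product of signs over a list of indices equals a product of powers by multiplicity -/
lemma prod_signs_list (n : ℕ) (a : Fin n → Bool) (L : List ℕ) (hL : ∀ x ∈ L, x < n) :
    (L.map (signs n a)).prod
      = ∏ i : Fin n, (if a i then (1:ℝ) else -1) ^ (L.count i.val) := by
  induction L with
  | nil => simp
  | cons x L ih =>
    have hx : x < n := hL x (by simp)
    have hL' : ∀ y ∈ L, y < n := fun y hy => hL y (by simp [hy])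
    rw [List.map_cons, List.prod_cons, ih hL']
    have h1 : signs n a x = ∏ i : Fin n, (if a i then (1:ℝ) else -1) ^ (if x = i.val then 1 else 0) := by
      rw [signs_lt a hx]
      rw [Fintype.prod_eq_single (⟨x, hx⟩ : Fin n)]
      · simp
      · intro i hi
        have : ¬ (x = i.val) := by
          intro h; apply hi; exact Fin.ext (by simp [h])
        simp [this]
    rw [h1, ← Finset.prod_mul_distrib]
    apply Finset.prod_congr rfl
    intro i _
    rw [← pow_add]
    congr 1
    simp [List.count_cons, beq_iff_eq]
    by_cases h : x = i.val <;> simp [h] <;> omega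

lemma sum_prod_signs (n : ℕ) (L : List ℕ) (hL : ∀ x ∈ L, x < n) :
    ∑ a : Fin n → Bool, (L.map (signs n a)).prod
      = ∏ i : Fin n, ((1:ℝ) ^ (L.count i.val) + (-1:ℝ) ^ (L.count i.val)) := by
  calc ∑ a : Fin n → Bool, (L.map (signs n a)).prod
      = ∑ a : Fin n → Bool, ∏ i : Fin n, (if a i then (1:ℝ) else -1) ^ (L.count i.val) := by
        exact Finset.sum_congr rfl fun a _ => prod_signs_list n a L hL
    _ = ∏ i : Fin n, ∑ b : Bool, (if b then (1:ℝ) else -1) ^ (L.count i.val) := by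
        rw [Finset.prod_univ_sum]
        rw [Fintype.piFinset_univ]
    _ = _ := by
        apply Finset.prod_congr rfl
        intro i _
        rw [Fintype.sum_bool]
        simp

lemma sum_prod_signs_even (n : ℕ) (L : List ℕ) (hL : ∀ x ∈ L, x < n)
    (h : ∀ i, Even (L.count i)) :
    ∑ a : Fin n → Bool, (L.map (signs n a)).prod = 2 ^ n := by
  rw [sum_prod_signs n L hL]
  have : ∀ i : Fin n, ((1:ℝ) ^ (L.count i.val) + (-1:ℝ) ^ (L.count i.val)) = 2 := by
    intro i
    rw [(h i.val).neg_one_pow]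
    norm_num
  rw [Finset.prod_congr rfl (fun i _ => this i)]
  simp

lemma sum_prod_signs_odd (n : ℕ) (L : List ℕ) (hL : ∀ x ∈ L, x < n)
    {i₀ : ℕ} (h : ¬ Even (L.count i₀)) :
    ∑ a : Fin n → Bool, (L.map (signs n a)).prod = 0 := by
  have hi₀ : i₀ < n := by
    by_contra hc
    have : L.count i₀ = 0 := by
      rw [List.count_eq_zero]
      intro hmem
      exact hc (hL i₀ hmem)
    simp [this] at h
  rw [sum_prod_signs n L hL]
  apply Finset.prod_eq_zero (Finset.mem_univ (⟨i₀, hi₀⟩ : Fin n))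
  rw [Odd.neg_one_pow (Nat.odd_iff.mpr (Nat.mod_two_ne_zero.mp ?_))]
  · norm_num
  · simpa [Nat.even_iff] using h


lemma perm_swapJ (a b c d : ℕ) (t : List ℕ) :
    (a :: b :: c :: d :: t).Perm (c :: d :: a :: b :: t) := by
  have := (List.perm_append_comm (l₁ := [a,b]) (l₂ := [c,d])).append_right t
  simpa using this

lemma perm_swapK (w x y z a b c d : ℕ) (t : List ℕ) :
    (w :: x :: y :: z :: a :: b :: c :: d :: t).Perm (w :: x :: y :: z :: c :: d :: a :: b :: t) :=
  ((((perm_swapJ a b c d t).cons z).cons y).cons x).cons w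

lemma char8_core (d e j1 j2 k1 k2 : ℕ) (hd : 1 ≤ d) (he : 1 ≤ e) (hde : d ≠ e)
    (hj : j1 < j2) (hk : k1 < k2)
    (H : ∀ i, Even (List.count i [j1, j1+d, j2, j2+d, k1, k1+e, k2, k2+e])) :
    j2 = j1 + e ∧ k1 = j1 ∧ k2 = j1 + d := by
  have hj1k1 : j1 = k1 := by
    rcases lt_trichotomy j1 k1 with h | h | h
    · exfalso
      have h1 := H j1
      simp only [List.count_cons, List.count_nil, beq_iff_eq, Nat.even_iff] at h1
      split_ifs at h1 <;> omega
    · exact h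
    · exfalso
      have h1 := H k1
      simp only [List.count_cons, List.count_nil, beq_iff_eq, Nat.even_iff] at h1
      split_ifs at h1 <;> omega
  subst hj1k1
  have hmax : j2 + d = k2 + e := by
    rcases lt_trichotomy (j2 + d) (k2 + e) with h | h | h
    · exfalso
      have h1 := H (k2 + e)
      simp only [List.count_cons, List.count_nil, beq_iff_eq, Nat.even_iff] at h1
      split_ifs at h1 <;> omega
    · exact h
    · exfalso
      have h1 := H (j2 + d)
      simp only [List.count_cons, List.count_nil, beq_iff_eq, Nat.even_iff] at h1
      split_ifs at h1 <;> omega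
  rcases lt_trichotomy j2 k2 with h | h | h
  · have halt : j1 + d = k2 ∨ j1 + e = k2 := by
      have h1 := H k2
      simp only [List.count_cons, List.count_nil, beq_iff_eq, Nat.even_iff] at h1
      split_ifs at h1 <;> omega
    rcases halt with halt | halt
    · exact ⟨by omega, rfl, by omega⟩
    · exfalso
      have h1 := H j2
      simp only [List.count_cons, List.count_nil, beq_iff_eq, Nat.even_iff] at h1
      split_ifs at h1 <;> omega
  · omega
  · have halt : j1 + d = j2 ∨ j1 + e = j2 := by
      have h1 := H j2
      simp only [List.count_cons, List.count_nil, beq_iff_eq, Nat.even_iff] at h1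
      split_ifs at h1 <;> omega
    rcases halt with halt | halt
    · exfalso
      have h1 := H k2
      simp only [List.count_cons, List.count_nil, beq_iff_eq, Nat.even_iff] at h1
      split_ifs at h1 <;> omega
    · exact ⟨by omega, rfl, by omega⟩

lemma char8_ne (d e j1 j2 k1 k2 : ℕ) (hd : 1 ≤ d) (he : 1 ≤ e) (hde : d ≠ e) :
    (∀ i, Even (List.count i [j1, j1+d, j2, j2+d, k1, k1+e, k2, k2+e])) ↔
      ((j1 = j2 ∧ k1 = k2) ∨
       (j2 = j1 + e ∧ k1 = j1 ∧ k2 = j1 + d) ∨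
       (j2 = j1 + e ∧ k2 = j1 ∧ k1 = j1 + d) ∨
       (j1 = j2 + e ∧ k1 = j2 ∧ k2 = j2 + d) ∨
       (j1 = j2 + e ∧ k2 = j2 ∧ k1 = j2 + d)) := by
  constructor
  · intro H
    have HJ : ∀ i, Even (List.count i [j2, j2+d, j1, j1+d, k1, k1+e, k2, k2+e]) := by
      intro i; rw [List.Perm.count_eq (perm_swapJ _ _ _ _ _)]; exact H i
    have HK : ∀ i, Even (List.count i [j1, j1+d, j2, j2+d, k2, k2+e, k1, k1+e]) := by
      intro i; rw [List.Perm.count_eq (perm_swapK _ _ _ _ _ _ _ _ _)]; exact H i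
    have HJK : ∀ i, Even (List.count i [j2, j2+d, j1, j1+d, k2, k2+e, k1, k1+e]) := by
      intro i; rw [List.Perm.count_eq (perm_swapK _ _ _ _ _ _ _ _ _)]; exact HJ i
    rcases lt_trichotomy j1 j2 with hj | hj | hj
    · rcases lt_trichotomy k1 k2 with hk | hk | hk
      · exact Or.inr (Or.inl (char8_core d e j1 j2 k1 k2 hd he hde hj hk H))
      · exfalso
        subst hk
        have h1 := H j1
        simp only [List.count_cons, List.count_nil, beq_iff_eq, Nat.even_iff] at h1
        split_ifs at h1 <;> omega
      · obtain ⟨c1, c2, c3⟩ := char8_core d e j1 j2 k2 k1 hd he hde hj hk HK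
        exact Or.inr (Or.inr (Or.inl ⟨c1, c2, c3⟩))
    · subst hj
      rcases lt_trichotomy k1 k2 with hk | hk | hk
      · exfalso
        have h1 := H k1
        simp only [List.count_cons, List.count_nil, beq_iff_eq, Nat.even_iff] at h1
        split_ifs at h1 <;> omega
      · exact Or.inl ⟨rfl, hk⟩
      · exfalso
        have h1 := H k2
        simp only [List.count_cons, List.count_nil, beq_iff_eq, Nat.even_iff] at h1
        split_ifs at h1 <;> omega
    · rcases lt_trichotomy k1 k2 with hk | hk | hk
      · obtain ⟨c1, c2, c3⟩ := char8_core d e j2 j1 k1 k2 hd he hde hj hk HJ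
        exact Or.inr (Or.inr (Or.inr (Or.inl ⟨c1, c2, c3⟩)))
      · exfalso
        subst hk
        have h1 := H j2
        simp only [List.count_cons, List.count_nil, beq_iff_eq, Nat.even_iff] at h1
        split_ifs at h1 <;> omega
      · obtain ⟨c1, c2, c3⟩ := char8_core d e j2 j1 k2 k1 hd he hde hj hk HJK
        exact Or.inr (Or.inr (Or.inr (Or.inr ⟨c1, c2, c3⟩)))
  · intro h i
    rcases h with ⟨h1, h2⟩ | ⟨h1, h2, h3⟩ | ⟨h1, h2, h3⟩ | ⟨h1, h2, h3⟩ | ⟨h1, h2, h3⟩ <;>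
      subst h1 <;> subst h2 <;> try subst h3
    all_goals
      simp only [List.count_cons, List.count_nil, beq_iff_eq, Nat.even_iff]
    all_goals split_ifs <;> omega

lemma char8_eq (d j1 j2 k1 k2 : ℕ) (hd : 1 ≤ d) :
    (∀ i, Even (List.count i [j1, j1+d, j2, j2+d, k1, k1+d, k2, k2+d])) ↔
      ((j1 = j2 ∧ k1 = k2) ∨ (j1 = k1 ∧ j2 = k2) ∨ (j1 = k2 ∧ j2 = k1)) := by
  constructor
  · intro H
    rcases lt_trichotomy j1 j2 with hj | hj | hj
    · rcases lt_trichotomy k1 k2 with hk | hk | hk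
      -- sorted: prove j1 = k1 ∧ j2 = k2
      · have hj1k1 : j1 = k1 := by
          rcases lt_trichotomy j1 k1 with h | h | h
          · exfalso
            have h1 := H j1
            simp only [List.count_cons, List.count_nil, beq_iff_eq, Nat.even_iff] at h1
            split_ifs at h1 <;> omega
          · exact h
          · exfalso
            have h1 := H k1
            simp only [List.count_cons, List.count_nil, beq_iff_eq, Nat.even_iff] at h1
            split_ifs at h1 <;> omega
        subst hj1k1
        have hj2k2 : j2 = k2 := by
          rcases lt_trichotomy j2 k2 with h | h | h
          · exfalso
            have h1 := H j2
            simp only [List.count_cons, List.count_nil, beq_iff_eq, Nat.even_iff] at h1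
            split_ifs at h1 <;> omega
          · exact h
          · exfalso
            have h1 := H k2
            simp only [List.count_cons, List.count_nil, beq_iff_eq, Nat.even_iff] at h1
            split_ifs at h1 <;> omega
        exact Or.inr (Or.inl ⟨rfl, hj2k2⟩)
      · exfalso
        subst hk
        have h1 := H j1
        simp only [List.count_cons, List.count_nil, beq_iff_eq, Nat.even_iff] at h1
        split_ifs at h1 <;> omega
      -- k2 < k1 : prove j1 = k2 ∧ j2 = k1
      · have hj1k2 : j1 = k2 := by
          rcases lt_trichotomy j1 k2 with h | h | h
          · exfalso
            have h1 := H j1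
            simp only [List.count_cons, List.count_nil, beq_iff_eq, Nat.even_iff] at h1
            split_ifs at h1 <;> omega
          · exact h
          · exfalso
            have h1 := H k2
            simp only [List.count_cons, List.count_nil, beq_iff_eq, Nat.even_iff] at h1
            split_ifs at h1 <;> omega
        subst hj1k2
        have hj2k1 : j2 = k1 := by
          rcases lt_trichotomy j2 k1 with h | h | h
          · exfalso
            have h1 := H j2
            simp only [List.count_cons, List.count_nil, beq_iff_eq, Nat.even_iff] at h1
            split_ifs at h1 <;> omega
          · exact h
          · exfalso
            have h1 := H k1
            simp only [List.count_cons, List.count_nil, beq_iff_eq, Nat.even_iff] at h1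
            split_ifs at h1 <;> omega
        exact Or.inr (Or.inr ⟨rfl, hj2k1⟩)
    · subst hj
      rcases lt_trichotomy k1 k2 with hk | hk | hk
      · exfalso
        have h1 := H k1
        simp only [List.count_cons, List.count_nil, beq_iff_eq, Nat.even_iff] at h1
        split_ifs at h1 <;> omega
      · exact Or.inl ⟨rfl, hk⟩
      · exfalso
        have h1 := H k2
        simp only [List.count_cons, List.count_nil, beq_iff_eq, Nat.even_iff] at h1
        split_ifs at h1 <;> omega
    -- j2 < j1 : symmetric
    · rcases lt_trichotomy k1 k2 with hk | hk | hk
      · have hj2k1 : j2 = k1 := by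
          rcases lt_trichotomy j2 k1 with h | h | h
          · exfalso
            have h1 := H j2
            simp only [List.count_cons, List.count_nil, beq_iff_eq, Nat.even_iff] at h1
            split_ifs at h1 <;> omega
          · exact h
          · exfalso
            have h1 := H k1
            simp only [List.count_cons, List.count_nil, beq_iff_eq, Nat.even_iff] at h1
            split_ifs at h1 <;> omega
        subst hj2k1
        have hj1k2 : j1 = k2 := by
          rcases lt_trichotomy j1 k2 with h | h | h
          · exfalso
            have h1 := H j1
            simp only [List.count_cons, List.count_nil, beq_iff_eq, Nat.even_iff] at h1
            split_ifs at h1 <;> omega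
          · exact h
          · exfalso
            have h1 := H k2
            simp only [List.count_cons, List.count_nil, beq_iff_eq, Nat.even_iff] at h1
            split_ifs at h1 <;> omega
        exact Or.inr (Or.inr ⟨hj1k2, rfl⟩)
      · exfalso
        subst hk
        have h1 := H j2
        simp only [List.count_cons, List.count_nil, beq_iff_eq, Nat.even_iff] at h1
        split_ifs at h1 <;> omega
      · have hj2k2 : j2 = k2 := by
          rcases lt_trichotomy j2 k2 with h | h | h
          · exfalso
            have h1 := H j2
            simp only [List.count_cons, List.count_nil, beq_iff_eq, Nat.even_iff] at h1
            split_ifs at h1 <;> omega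
          · exact h
          · exfalso
            have h1 := H k2
            simp only [List.count_cons, List.count_nil, beq_iff_eq, Nat.even_iff] at h1
            split_ifs at h1 <;> omega
        subst hj2k2
        have hj1k1 : j1 = k1 := by
          rcases lt_trichotomy j1 k1 with h | h | h
          · exfalso
            have h1 := H j1
            simp only [List.count_cons, List.count_nil, beq_iff_eq, Nat.even_iff] at h1
            split_ifs at h1 <;> omega
          · exact h
          · exfalso
            have h1 := H k1
            simp only [List.count_cons, List.count_nil, beq_iff_eq, Nat.even_iff] at h1
            split_ifs at h1 <;> omega
        exact Or.inr (Or.inl ⟨hj1k1, rfl⟩)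
  · intro h i
    rcases h with ⟨h1, h2⟩ | ⟨h1, h2⟩ | ⟨h1, h2⟩ <;> subst h1 <;> subst h2 <;>
      simp only [List.count_cons, List.count_nil, beq_iff_eq, Nat.even_iff] <;>
      split_ifs <;> omega

lemma char4 (d j1 j2 : ℕ) (hd : 1 ≤ d) :
    (∀ i, Even (List.count i [j1, j1+d, j2, j2+d])) ↔ j1 = j2 := by
  constructor
  · intro H
    rcases lt_trichotomy j1 j2 with h | h | h
    · exfalso
      have h1 := H j1
      have h2 := H j2
      simp only [List.count_cons, List.count_nil, beq_iff_eq, Nat.even_iff] at h1 h2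
      split_ifs at h1 h2 <;> omega
    · exact h
    · exfalso
      have h1 := H j1
      have h2 := H j2
      simp only [List.count_cons, List.count_nil, beq_iff_eq, Nat.even_iff] at h1 h2
      split_ifs at h1 h2 <;> omega
  · rintro rfl i
    simp only [List.count_cons, List.count_nil, beq_iff_eq, Nat.even_iff]
    split_ifs <;> omega

-- generic: list-monomial sum with decidable characterization
lemma sum_prod_signs_ite (n : ℕ) (L : List ℕ) (hL : ∀ x ∈ L, x < n)
    (P : Prop) [Decidable P] (hP : (∀ i, Even (L.count i)) ↔ P) :
    ∑ a : Fin n → Bool, (L.map (signs n a)).prod = if P then (2:ℝ) ^ n else 0 := by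
  by_cases h : P
  · rw [if_pos h]
    exact sum_prod_signs_even n L hL (hP.mpr h)
  · rw [if_neg h]
    obtain ⟨i₀, hi₀⟩ := not_forall.mp (fun hall => h (hP.mp hall))
    exact sum_prod_signs_odd n L hL hi₀

lemma moment1 (n d : ℕ) (hd : 1 ≤ d) (hdn : d < n) :
    ∑ a : Fin n → Bool, (acorr n d (signs n a))^2 = 2 ^ n * ((n - d : ℕ) : ℝ) := by
  have expand : ∀ x : ℕ → ℝ, (acorr n d x)^2
      = ∑ j1 ∈ range (n - d), ∑ j2 ∈ range (n - d),
          (x j1 * x (j1 + d)) * (x j2 * x (j2 + d)) := by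
    intro x
    rw [acorr, sq, Finset.sum_mul_sum]
  calc ∑ a : Fin n → Bool, (acorr n d (signs n a))^2
      = ∑ j1 ∈ range (n - d), ∑ j2 ∈ range (n - d),
          ∑ a : Fin n → Bool, ([j1, j1+d, j2, j2+d].map (signs n a)).prod := by
        rw [Finset.sum_congr rfl fun a _ => expand (signs n a)]
        rw [Finset.sum_comm]
        refine Finset.sum_congr rfl fun j1 _ => ?_
        rw [Finset.sum_comm]
        refine Finset.sum_congr rfl fun j2 _ => ?_
        refine Finset.sum_congr rfl fun a _ => ?_
        simp only [List.map_cons, List.map_nil, List.prod_cons, List.prod_nil]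
        ring
    _ = ∑ j1 ∈ range (n - d), ∑ j2 ∈ range (n - d), (if j1 = j2 then (2:ℝ)^n else 0) := by
        refine Finset.sum_congr rfl fun j1 hj1 => Finset.sum_congr rfl fun j2 hj2 => ?_
        simp only [mem_range] at hj1 hj2
        refine sum_prod_signs_ite n _ ?_ _ (char4 d j1 j2 hd)
        intro x hx
        simp only [List.mem_cons, List.not_mem_nil] at hx
        rcases hx with rfl | rfl | rfl | rfl | h
        · omega
        · omega
        · omega
        · omega
        · exact absurd h (by simp)
    _ = 2 ^ n * ((n - d : ℕ) : ℝ) := by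
        have : ∀ j1 ∈ range (n - d),
            (∑ j2 ∈ range (n - d), if j1 = j2 then (2:ℝ)^n else 0) = (2:ℝ)^n := by
          intro j1 hj1
          rw [Finset.sum_ite_eq (range (n-d)) j1 (fun _ => (2:ℝ)^n)]
          exact if_pos hj1
        rw [Finset.sum_congr rfl this, Finset.sum_const, card_range]
        push_cast
        ring

lemma sum_ite_push (P : Prop) [Decidable P] (s : Finset ℕ) (f : ℕ → ℝ) :
    (∑ x ∈ s, if P then f x else 0) = if P then ∑ x ∈ s, f x else 0 := by
  split_ifs <;> simp

lemma sum_ite_eqr (N t : ℕ) (c : ℝ) :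
    (∑ x ∈ range N, if x = t then c else 0) = if t < N then c else 0 := by
  rw [Finset.sum_ite_eq']; simp

lemma sum_ite_eql (N t : ℕ) (c : ℝ) :
    (∑ x ∈ range N, if t = x then c else 0) = if t < N then c else 0 := by
  rw [Finset.sum_ite_eq]; simp

lemma sum_ite_lt (N m : ℕ) (c : ℝ) :
    (∑ x ∈ range N, if x < m then c else 0) = ((min m N : ℕ) : ℝ) * c := by
  classical
  have hf : (range N).filter (fun x => x < m) = range (min m N) := by
    ext x; simp only [mem_filter, mem_range]; omega
  rw [Finset.sum_ite, hf, Finset.sum_const, Finset.sum_const_zero, add_zero,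
    card_range, nsmul_eq_mul]

lemma expand4 (n d e : ℕ) (x : ℕ → ℝ) : (acorr n d x)^2 * (acorr n e x)^2
    = ∑ j1 ∈ range (n - d), ∑ j2 ∈ range (n - d),
      ∑ k1 ∈ range (n - e), ∑ k2 ∈ range (n - e),
        (x j1 * x (j1 + d)) * (x j2 * x (j2 + d)) *
        ((x k1 * x (k1 + e)) * (x k2 * x (k2 + e))) := by
  rw [acorr, acorr, sq, sq, Finset.sum_mul_sum, Finset.sum_mul_sum, Finset.sum_mul]
  refine Finset.sum_congr rfl fun j1 _ => ?_
  rw [Finset.sum_mul]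
  refine Finset.sum_congr rfl fun j2 _ => ?_
  rw [Finset.mul_sum]
  refine Finset.sum_congr rfl fun k1 _ => ?_
  rw [Finset.mul_sum]

lemma swap_inner (n d e : ℕ) :
    ∑ a : Fin n → Bool, (acorr n d (signs n a))^2 * (acorr n e (signs n a))^2
    = ∑ j1 ∈ range (n - d), ∑ j2 ∈ range (n - d),
      ∑ k1 ∈ range (n - e), ∑ k2 ∈ range (n - e),
        ∑ a : Fin n → Bool,
          ([j1, j1+d, j2, j2+d, k1, k1+e, k2, k2+e].map (signs n a)).prod := by
  rw [Finset.sum_congr rfl fun a _ => expand4 n d e (signs n a)]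
  rw [Finset.sum_comm]
  refine Finset.sum_congr rfl fun j1 _ => ?_
  rw [Finset.sum_comm]
  refine Finset.sum_congr rfl fun j2 _ => ?_
  rw [Finset.sum_comm]
  refine Finset.sum_congr rfl fun k1 _ => ?_
  rw [Finset.sum_comm]
  refine Finset.sum_congr rfl fun k2 _ => ?_
  refine Finset.sum_congr rfl fun a _ => ?_
  simp only [List.map_cons, List.map_nil, List.prod_cons, List.prod_nil]
  ring

lemma bounds8 (n d e j1 j2 k1 k2 : ℕ) (hdn : d < n) (hen : e < n)
    (hj1 : j1 < n - d) (hj2 : j2 < n - d) (hk1 : k1 < n - e) (hk2 : k2 < n - e) :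
    ∀ x ∈ [j1, j1+d, j2, j2+d, k1, k1+e, k2, k2+e], x < n := by
  intro x hx
  simp only [List.mem_cons, List.not_mem_nil, or_false] at hx
  rcases hx with rfl | rfl | rfl | rfl | rfl | rfl | rfl | rfl <;> omega

lemma moment2_ne (n d e : ℕ) (hd : 1 ≤ d) (hdn : d < n) (he : 1 ≤ e) (hen : e < n)
    (hde : d ≠ e) :
    ∑ a : Fin n → Bool, (acorr n d (signs n a))^2 * (acorr n e (signs n a))^2
      = 2 ^ n * (((n - d : ℕ) : ℝ) * ((n - e : ℕ) : ℝ) + 4 * ((n - d - e : ℕ) : ℝ)) := by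
  set c : ℝ := (2:ℝ)^n with hc
  rw [swap_inner n d e]
  have step2 : ∀ j1 ∈ range (n-d), ∀ j2 ∈ range (n-d), ∀ k1 ∈ range (n-e), ∀ k2 ∈ range (n-e),
      (∑ a : Fin n → Bool,
        ([j1, j1+d, j2, j2+d, k1, k1+e, k2, k2+e].map (signs n a)).prod)
      = (if j2 = j1 then if k2 = k1 then c else 0 else 0)
      + ((if j2 = j1 + e then if k1 = j1 then if k2 = j1 + d then c else 0 else 0 else 0)
      + ((if j2 = j1 + e then if k1 = j1 + d then if k2 = j1 then c else 0 else 0 else 0)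
      + ((if j1 = j2 + e then if k1 = j2 then if k2 = j2 + d then c else 0 else 0 else 0)
      + (if j1 = j2 + e then if k1 = j2 + d then if k2 = j2 then c else 0 else 0 else 0)))) := by
    intro j1 hj1 j2 hj2 k1 hk1 k2 hk2
    simp only [mem_range] at hj1 hj2 hk1 hk2
    rw [sum_prod_signs_ite n _ (bounds8 n d e j1 j2 k1 k2 hdn hen hj1 hj2 hk1 hk2)
      _ (char8_ne d e j1 j2 k1 k2 hd he hde), ← hc]
    split_ifs <;> first | ring1 | (exfalso; omega)
  rw [Finset.sum_congr rfl fun j1 hj1 => Finset.sum_congr rfl fun j2 hj2 =>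
    Finset.sum_congr rfl fun k1 hk1 => Finset.sum_congr rfl fun k2 hk2 =>
      step2 j1 hj1 j2 hj2 k1 hk1 k2 hk2]
  simp only [Finset.sum_add_distrib]
  have S0 : (∑ j1 ∈ range (n - d), ∑ j2 ∈ range (n - d),
      ∑ k1 ∈ range (n - e), ∑ k2 ∈ range (n - e),
        (if j2 = j1 then if k2 = k1 then c else 0 else 0))
      = ((n - d : ℕ) : ℝ) * (((n - e : ℕ) : ℝ) * c) := by
    simp only [sum_ite_push, sum_ite_eqr, sum_ite_lt, min_self]
  have S1 : (∑ j1 ∈ range (n - d), ∑ j2 ∈ range (n - d),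
      ∑ k1 ∈ range (n - e), ∑ k2 ∈ range (n - e),
        (if j2 = j1 + e then if k1 = j1 then if k2 = j1 + d then c else 0 else 0 else 0))
      = ((n - d - e : ℕ) : ℝ) * c := by
    simp only [sum_ite_push, sum_ite_eqr]
    rw [Finset.sum_congr rfl (fun j1 _ => ?_), sum_ite_lt, min_eq_left (Nat.sub_le _ _)]
    show (if j1 + e < n - d then if j1 < n - e then if j1 + d < n - e then c else 0 else 0 else 0)
      = if j1 < n - d - e then c else 0
    split_ifs <;> first | rfl | (exfalso; omega)
  have S2 : (∑ j1 ∈ range (n - d), ∑ j2 ∈ range (n - d),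
      ∑ k1 ∈ range (n - e), ∑ k2 ∈ range (n - e),
        (if j2 = j1 + e then if k1 = j1 + d then if k2 = j1 then c else 0 else 0 else 0))
      = ((n - d - e : ℕ) : ℝ) * c := by
    simp only [sum_ite_push, sum_ite_eqr]
    rw [Finset.sum_congr rfl (fun j1 _ => ?_), sum_ite_lt, min_eq_left (Nat.sub_le _ _)]
    show (if j1 + e < n - d then if j1 + d < n - e then if j1 < n - e then c else 0 else 0 else 0)
      = if j1 < n - d - e then c else 0
    split_ifs <;> first | rfl | (exfalso; omega)
  have S3 : (∑ j1 ∈ range (n - d), ∑ j2 ∈ range (n - d),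
      ∑ k1 ∈ range (n - e), ∑ k2 ∈ range (n - e),
        (if j1 = j2 + e then if k1 = j2 then if k2 = j2 + d then c else 0 else 0 else 0))
      = ((n - d - e : ℕ) : ℝ) * c := by
    rw [Finset.sum_comm]
    simp only [sum_ite_push, sum_ite_eqr]
    rw [Finset.sum_congr rfl (fun j2 _ => ?_), sum_ite_lt, min_eq_left (Nat.sub_le _ _)]
    show (if j2 + e < n - d then if j2 < n - e then if j2 + d < n - e then c else 0 else 0 else 0)
      = if j2 < n - d - e then c else 0
    split_ifs <;> first | rfl | (exfalso; omega)
  have S4 : (∑ j1 ∈ range (n - d), ∑ j2 ∈ range (n - d),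
      ∑ k1 ∈ range (n - e), ∑ k2 ∈ range (n - e),
        (if j1 = j2 + e then if k1 = j2 + d then if k2 = j2 then c else 0 else 0 else 0))
      = ((n - d - e : ℕ) : ℝ) * c := by
    rw [Finset.sum_comm]
    simp only [sum_ite_push, sum_ite_eqr]
    rw [Finset.sum_congr rfl (fun j2 _ => ?_), sum_ite_lt, min_eq_left (Nat.sub_le _ _)]
    show (if j2 + e < n - d then if j2 + d < n - e then if j2 < n - e then c else 0 else 0 else 0)
      = if j2 < n - d - e then c else 0
    split_ifs <;> first | rfl | (exfalso; omega)
  rw [S0, S1, S2, S3, S4, hc]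
  ring

lemma moment2_eq (n d : ℕ) (hd : 1 ≤ d) (hdn : d < n) :
    ∑ a : Fin n → Bool, (acorr n d (signs n a))^2 * (acorr n d (signs n a))^2
      = 2 ^ n * (3 * ((n - d : ℕ) : ℝ)^2 - 2 * ((n - d : ℕ) : ℝ)) := by
  set c : ℝ := (2:ℝ)^n with hc
  rw [swap_inner n d d]
  have step2 : ∀ j1 ∈ range (n-d), ∀ j2 ∈ range (n-d), ∀ k1 ∈ range (n-d), ∀ k2 ∈ range (n-d),
      (∑ a : Fin n → Bool,
        ([j1, j1+d, j2, j2+d, k1, k1+d, k2, k2+d].map (signs n a)).prod)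
      = (if j2 = j1 then if k2 = k1 then c else 0 else 0)
      + ((if k1 = j1 then if k2 = j2 then c else 0 else 0)
      + ((if k1 = j2 then if k2 = j1 then c else 0 else 0)
      - (2 : ℝ) * (if j2 = j1 then if k1 = j1 then if k2 = j1 then c else 0 else 0 else 0))) := by
    intro j1 hj1 j2 hj2 k1 hk1 k2 hk2
    simp only [mem_range] at hj1 hj2 hk1 hk2
    rw [sum_prod_signs_ite n _ (bounds8 n d d j1 j2 k1 k2 hdn hdn hj1 hj2 hk1 hk2)
      _ (char8_eq d j1 j2 k1 k2 hd), ← hc]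
    split_ifs <;> first | ring1 | (exfalso; omega)
  rw [Finset.sum_congr rfl fun j1 hj1 => Finset.sum_congr rfl fun j2 hj2 =>
    Finset.sum_congr rfl fun k1 hk1 => Finset.sum_congr rfl fun k2 hk2 =>
      step2 j1 hj1 j2 hj2 k1 hk1 k2 hk2]
  simp only [Finset.sum_add_distrib, Finset.sum_sub_distrib, ← Finset.mul_sum]
  have S0 : (∑ j1 ∈ range (n - d), ∑ j2 ∈ range (n - d),
      ∑ k1 ∈ range (n - d), ∑ k2 ∈ range (n - d),
        (if j2 = j1 then if k2 = k1 then c else 0 else 0))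
      = ((n - d : ℕ) : ℝ) * (((n - d : ℕ) : ℝ) * c) := by
    simp only [sum_ite_push, sum_ite_eqr, sum_ite_lt, min_self]
  have SA : (∑ j1 ∈ range (n - d), ∑ j2 ∈ range (n - d),
      ∑ k1 ∈ range (n - d), ∑ k2 ∈ range (n - d),
        (if k1 = j1 then if k2 = j2 then c else 0 else 0))
      = ((n - d : ℕ) : ℝ) * (((n - d : ℕ) : ℝ) * c) := by
    simp only [sum_ite_push, sum_ite_eqr]
    rw [Finset.sum_congr rfl
      (fun j1 _ => by rw [sum_ite_lt, min_self]), sum_ite_lt, min_self]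
  have SB : (∑ j1 ∈ range (n - d), ∑ j2 ∈ range (n - d),
      ∑ k1 ∈ range (n - d), ∑ k2 ∈ range (n - d),
        (if k1 = j2 then if k2 = j1 then c else 0 else 0))
      = ((n - d : ℕ) : ℝ) * (((n - d : ℕ) : ℝ) * c) := by
    simp only [sum_ite_push, sum_ite_eqr, sum_ite_lt, min_self]
    rw [← Finset.mul_sum, sum_ite_lt, min_self]
  have S4 : (∑ j1 ∈ range (n - d), ∑ j2 ∈ range (n - d),
      ∑ k1 ∈ range (n - d), ∑ k2 ∈ range (n - d),
        (if j2 = j1 then if k1 = j1 then if k2 = j1 then c else 0 else 0 else 0))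
      = ((n - d : ℕ) : ℝ) * c := by
    simp only [sum_ite_push, sum_ite_eqr]
    have point : ∀ x ∈ range (n - d),
        (if x < n - d then if x < n - d then if x < n - d then c else 0 else 0 else 0)
        = if x < n - d then c else 0 := by
      intro x _; split_ifs <;> rfl
    rw [Finset.sum_congr rfl point, sum_ite_lt, min_self]
  rw [S0, SA, SB, S4, hc]
  ring

lemma inner2_le (n j k : ℕ) (x : ℕ → ℝ) (hkj : k ≤ j) :
    (∑ l ∈ range n, ∑ m ∈ range n, if j + l = k + m then x l * x m else 0)
      = acorr n (j - k) x := by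
  have h1 : ∀ l ∈ range n, (∑ m ∈ range n, if j + l = k + m then x l * x m else 0)
      = if l + (j - k) < n then x l * x (l + (j - k)) else 0 := by
    intro l _
    rw [Finset.sum_congr rfl fun m _ => if_congr (by omega : (j + l = k + m) ↔ (m = l + (j - k))) rfl rfl]
    rw [Finset.sum_ite_eq' (range n) (l + (j - k)) (fun m => x l * x m)]
    simp [mem_range]
  rw [Finset.sum_congr rfl h1]
  rw [Finset.sum_ite, Finset.sum_const_zero, add_zero]
  rw [show (range n).filter (fun l => l + (j - k) < n) = range (n - (j - k)) by
    ext l; simp only [mem_filter, mem_range]; omega]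
  rfl

lemma inner2_gt (n j k : ℕ) (x : ℕ → ℝ) (hjk : j < k) :
    (∑ l ∈ range n, ∑ m ∈ range n, if j + l = k + m then x l * x m else 0)
      = acorr n (k - j) x := by
  rw [Finset.sum_comm]
  have h1 : ∀ m ∈ range n, (∑ l ∈ range n, if j + l = k + m then x l * x m else 0)
      = if m + (k - j) < n then x m * x (m + (k - j)) else 0 := by
    intro m _
    rw [Finset.sum_congr rfl fun l _ => if_congr (by omega : (j + l = k + m) ↔ (l = m + (k - j))) rfl rfl]
    rw [Finset.sum_ite_eq' (range n) (m + (k - j)) (fun l => x l * x m)]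
    simp only [mem_range]
    split_ifs <;> first | ring1 | rfl
  rw [Finset.sum_congr rfl h1]
  rw [Finset.sum_ite, Finset.sum_const_zero, add_zero]
  rw [show (range n).filter (fun m => m + (k - j) < n) = range (n - (k - j)) by
    ext m; simp only [mem_filter, mem_range]; omega]
  rfl

lemma quadSum_eq (n : ℕ) (hn : 0 < n) (x : ℕ → ℝ) :
    quadSum n x = (acorr n 0 x)^2 + 2 * ∑ d ∈ Ico 1 n, (acorr n d x)^2 := by
  have main : quadSum n x
      = ∑ j ∈ range n, ∑ k ∈ range n,
          x j * x k * (if k ≤ j then acorr n (j - k) x else acorr n (k - j) x) := by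
    unfold quadSum
    refine Finset.sum_congr rfl fun j hj => Finset.sum_congr rfl fun k hk => ?_
    rw [show (∑ l ∈ range n, ∑ m ∈ range n, if j + l = k + m then x j * x k * x l * x m else 0)
        = x j * x k * (∑ l ∈ range n, ∑ m ∈ range n, if j + l = k + m then x l * x m else 0) by
      rw [Finset.mul_sum]
      refine Finset.sum_congr rfl fun l _ => ?_
      rw [Finset.mul_sum]
      refine Finset.sum_congr rfl fun m _ => ?_
      split_ifs <;> ring1]
    by_cases h : k ≤ j
    · rw [if_pos h, inner2_le n j k x h]
    · rw [if_neg h, inner2_gt n j k x (by omega)]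
  rw [main]
  have split : ∀ j ∈ range n, ∀ k ∈ range n,
      x j * x k * (if k ≤ j then acorr n (j - k) x else acorr n (k - j) x)
      = (if k ≤ j then x j * x k * acorr n (j - k) x else 0)
      + (if j < k then x j * x k * acorr n (k - j) x else 0) := by
    intro j _ k _
    split_ifs <;> first | ring1 | (exfalso; omega)
  rw [Finset.sum_congr rfl fun j hj => Finset.sum_congr rfl fun k hk => split j hj k hk]
  simp only [Finset.sum_add_distrib]
  have T1 : (∑ j ∈ range n, ∑ k ∈ range n,
      if k ≤ j then x j * x k * acorr n (j - k) x else 0)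
      = ∑ d ∈ range n, (acorr n d x)^2 := by
    rw [Finset.sum_comm]
    have h1 : ∀ k ∈ range n, (∑ j ∈ range n, if k ≤ j then x j * x k * acorr n (j - k) x else 0)
        = ∑ t ∈ range (n - k), x (k + t) * x k * acorr n t x := by
      intro k hk
      rw [Finset.sum_ite, Finset.sum_const_zero, add_zero]
      rw [show (range n).filter (fun j => k ≤ j) = Ico k n by
        ext j; simp only [mem_filter, mem_range, mem_Ico]; omega]
      rw [Finset.sum_Ico_eq_sum_range]
      refine Finset.sum_congr rfl fun t _ => ?_
      rw [show k + t - k = t by omega]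
    rw [Finset.sum_congr rfl h1]
    rw [Finset.sum_comm' (by
      intro k t
      simp only [mem_range]
      omega : ∀ (k t : ℕ),
        k ∈ range n ∧ t ∈ range (n - k) ↔ k ∈ range (n - t) ∧ t ∈ range n)]
    refine Finset.sum_congr rfl fun t _ => ?_
    rw [sq, acorr, ← Finset.sum_mul]
    congr 1
    refine Finset.sum_congr rfl fun k _ => ?_
    ring
  have T2 : (∑ j ∈ range n, ∑ k ∈ range n,
      if j < k then x j * x k * acorr n (k - j) x else 0)
      = ∑ d ∈ Ico 1 n, (acorr n d x)^2 := by
    have h1 : ∀ j ∈ range n, (∑ k ∈ range n, if j < k then x j * x k * acorr n (k - j) x else 0)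
        = ∑ t ∈ range (n - (j + 1)), x j * x (j + 1 + t) * acorr n (t + 1) x := by
      intro j hj
      rw [Finset.sum_ite, Finset.sum_const_zero, add_zero]
      rw [show (range n).filter (fun k => j < k) = Ico (j+1) n by
        ext k; simp only [mem_filter, mem_range, mem_Ico]; omega]
      rw [Finset.sum_Ico_eq_sum_range]
      refine Finset.sum_congr rfl fun t _ => ?_
      rw [show j + 1 + t - j = t + 1 by omega]
    rw [Finset.sum_congr rfl h1]
    rw [Finset.sum_comm' (by
      intro j t
      simp only [mem_range]
      omega : ∀ (j t : ℕ),
          j ∈ range n ∧ t ∈ range (n - (j+1)) ↔ j ∈ range (n - (t+1)) ∧ t ∈ range (n - 1))]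
    rw [Finset.sum_Ico_eq_sum_range]
    refine Finset.sum_congr rfl fun t _ => ?_
    rw [sq, acorr, ← Finset.sum_mul]
    rw [show (1 : ℕ) + t = t + 1 by omega]
    congr 1
    refine Finset.sum_congr rfl fun j _ => ?_
    rw [show j + 1 + t = j + (t + 1) by omega]
  rw [T1, T2]
  rw [Finset.range_eq_Ico]
  rw [Finset.sum_eq_sum_Ico_succ_bot hn]
  ring

lemma int_exp (D : ℤ) :
    (∫ θ in (0:ℝ)..(2 * Real.pi), Complex.exp ((D : ℂ) * Complex.I * θ))
      = if D = 0 then ((2 * Real.pi : ℝ) : ℂ) else 0 := by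
  by_cases hD : D = 0
  · subst hD
    simp only [Int.cast_zero, zero_mul, Complex.exp_zero, if_pos]
    rw [intervalIntegral.integral_const]
    simp
  · rw [if_neg hD]
    have hc : (D : ℂ) * Complex.I ≠ 0 :=
      mul_ne_zero (Int.cast_ne_zero.mpr hD) Complex.I_ne_zero
    rw [integral_exp_mul_complex hc]
    have h1 : (D : ℂ) * Complex.I * ((2 * Real.pi : ℝ) : ℂ)
        = (D : ℂ) * (2 * (Real.pi : ℂ) * Complex.I) := by
      push_cast; ring
    rw [h1, Complex.exp_int_mul_two_pi_mul_I]
    simp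

lemma combine_exp (c1 c2 c3 c4 z1 z2 z3 z4 : ℂ) :
    (c1 * Complex.exp z1) * (c2 * Complex.exp z2) *
      ((c3 * Complex.exp z3) * (c4 * Complex.exp z4))
      = (c1 * c2 * c3 * c4) * Complex.exp (z1 + z2 + z3 + z4) := by
  rw [Complex.exp_add, Complex.exp_add, Complex.exp_add]
  ring

lemma conj_f (n : ℕ) (a : ℕ → ℝ) (θ : ℝ) :
    (starRingEnd ℂ) (∑ j ∈ Finset.range n, (a j : ℂ) * Complex.exp ((θ : ℂ) * Complex.I) ^ j)
      = ∑ k ∈ Finset.range n, (a k : ℂ) * Complex.exp (-((θ : ℂ) * Complex.I)) ^ k := by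
  rw [map_sum]
  refine Finset.sum_congr rfl fun k _ => ?_
  rw [map_mul, map_pow, Complex.conj_ofReal, ← Complex.exp_conj]
  congr 2
  simp [Complex.conj_ofReal]

lemma pointwise_expand (n : ℕ) (a : ℕ → ℝ) (θ : ℝ) :
    ((‖∑ j ∈ Finset.range n, (a j : ℂ) * Complex.exp ((θ : ℂ) * Complex.I) ^ j‖ ^ 4 : ℝ) : ℂ)
      = ∑ j ∈ range n, ∑ k ∈ range n, ∑ l ∈ range n, ∑ m ∈ range n,
          ((a j * a k * a l * a m : ℝ) : ℂ) *
            Complex.exp ((((j : ℤ) + l - ((k : ℤ) + m) : ℤ) : ℂ) * Complex.I * θ) := by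
  set w : ℂ := ∑ j ∈ Finset.range n, (a j : ℂ) * Complex.exp ((θ : ℂ) * Complex.I) ^ j with hw
  have h1 : ((‖w‖ ^ 4 : ℝ) : ℂ) = (w * (starRingEnd ℂ) w) * (w * (starRingEnd ℂ) w) := by
    rw [Complex.mul_conj]
    rw [show (4 : ℕ) = 2 * 2 from rfl, pow_mul, Complex.sq_norm]
    push_cast
    ring
  rw [h1]
  conv_lhs => rw [hw, conj_f n a θ, Finset.sum_mul_sum]
  rw [Finset.sum_mul]
  refine Finset.sum_congr rfl fun j hj => ?_
  rw [Finset.sum_mul]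
  refine Finset.sum_congr rfl fun k hk => ?_
  rw [Finset.mul_sum]
  refine Finset.sum_congr rfl fun l hl => ?_
  rw [Finset.mul_sum]
  refine Finset.sum_congr rfl fun m hm => ?_
  rw [show Complex.exp ((θ:ℂ) * Complex.I) ^ j
      = Complex.exp ((j:ℂ) * ((θ:ℂ) * Complex.I)) from (Complex.exp_nat_mul _ j).symm]
  rw [show Complex.exp ((θ:ℂ) * Complex.I) ^ l
      = Complex.exp ((l:ℂ) * ((θ:ℂ) * Complex.I)) from (Complex.exp_nat_mul _ l).symm]
  rw [show Complex.exp (-((θ:ℂ) * Complex.I)) ^ k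
      = Complex.exp ((k:ℂ) * (-((θ:ℂ) * Complex.I))) from (Complex.exp_nat_mul _ k).symm]
  rw [show Complex.exp (-((θ:ℂ) * Complex.I)) ^ m
      = Complex.exp ((m:ℂ) * (-((θ:ℂ) * Complex.I))) from (Complex.exp_nat_mul _ m).symm]
  rw [combine_exp]
  have harg : (j:ℂ) * ((θ:ℂ) * Complex.I) + (k:ℂ) * (-((θ:ℂ) * Complex.I))
      + (l:ℂ) * ((θ:ℂ) * Complex.I) + (m:ℂ) * (-((θ:ℂ) * Complex.I))
      = (((j : ℤ) + l - ((k : ℤ) + m) : ℤ) : ℂ) * Complex.I * θ := by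
    push_cast; ring
  rw [harg]
  push_cast
  ring

lemma contTerm (c : ℂ) (D : ℤ) :
    Continuous (fun θ : ℝ => c * Complex.exp ((D : ℂ) * Complex.I * θ)) := by
  apply continuous_const.mul
  exact Complex.continuous_exp.comp (continuous_const.mul Complex.continuous_ofReal)


lemma L4pow4_eq_quadSum (n : ℕ) (a : ℕ → ℝ) : L4pow4 n a = quadSum n a := by
  classical
  set P : Finset ((ℕ × ℕ) × (ℕ × ℕ)) :=
    (range n ×ˢ range n) ×ˢ (range n ×ˢ range n) with hP
  have flat : ∀ (f : ℕ → ℕ → ℕ → ℕ → ℂ),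
      (∑ p ∈ P, f p.1.1 p.1.2 p.2.1 p.2.2)
        = ∑ j ∈ range n, ∑ k ∈ range n, ∑ l ∈ range n, ∑ m ∈ range n, f j k l m := by
    intro f
    rw [hP]
    simp only [Finset.sum_product]
  have key : (∫ θ in (0:ℝ)..(2 * Real.pi),
      (‖∑ j ∈ Finset.range n, (a j : ℂ) * Complex.exp ((θ : ℂ) * Complex.I) ^ j‖) ^ 4)
      = 2 * Real.pi * quadSum n a := by
    have hC : (∫ θ in (0:ℝ)..(2 * Real.pi),
        (((‖∑ j ∈ Finset.range n, (a j : ℂ) * Complex.exp ((θ : ℂ) * Complex.I) ^ j‖) ^ 4 : ℝ) : ℂ))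
        = ((2 * Real.pi * quadSum n a : ℝ) : ℂ) := by
      rw [intervalIntegral.integral_congr
        (g := fun θ : ℝ => ∑ p ∈ P,
          ((a p.1.1 * a p.1.2 * a p.2.1 * a p.2.2 : ℝ) : ℂ) *
            Complex.exp ((((p.1.1 : ℤ) + p.2.1 - ((p.1.2 : ℤ) + p.2.2) : ℤ) : ℂ) * Complex.I * θ))
        (fun θ _ => by rw [pointwise_expand n a θ, ← flat])]
      rw [intervalIntegral.integral_finset_sum
        (fun p _ => (contTerm _ _).intervalIntegrable _ _)]
      have heval : ∀ p ∈ P,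
          (∫ θ in (0:ℝ)..(2 * Real.pi),
            ((a p.1.1 * a p.1.2 * a p.2.1 * a p.2.2 : ℝ) : ℂ) *
              Complex.exp ((((p.1.1 : ℤ) + p.2.1 - ((p.1.2 : ℤ) + p.2.2) : ℤ) : ℂ) * Complex.I * θ))
          = (((2 * Real.pi) * (if p.1.1 + p.2.1 = p.1.2 + p.2.2
              then a p.1.1 * a p.1.2 * a p.2.1 * a p.2.2 else 0) : ℝ) : ℂ) := by
        intro p _
        rw [intervalIntegral.integral_const_mul, int_exp]
        by_cases h : p.1.1 + p.2.1 = p.1.2 + p.2.2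
        · rw [if_pos (by omega : ((p.1.1 : ℤ) + p.2.1 - ((p.1.2 : ℤ) + p.2.2) : ℤ) = 0), if_pos h]
          push_cast
          ring
        · rw [if_neg (by omega : ¬ ((p.1.1 : ℤ) + p.2.1 - ((p.1.2 : ℤ) + p.2.2) : ℤ) = 0), if_neg h]
          simp
      rw [Finset.sum_congr rfl heval]
      have flat2 : (∑ p ∈ P, (((2 * Real.pi) * (if p.1.1 + p.2.1 = p.1.2 + p.2.2
            then a p.1.1 * a p.1.2 * a p.2.1 * a p.2.2 else 0) : ℝ) : ℂ))
          = ∑ j ∈ range n, ∑ k ∈ range n, ∑ l ∈ range n, ∑ m ∈ range n,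
            (((2 * Real.pi) * (if j + l = k + m then a j * a k * a l * a m else 0) : ℝ) : ℂ) :=
        flat (fun j k l m => (((2 * Real.pi) * (if j + l = k + m then a j * a k * a l * a m else 0) : ℝ) : ℂ))
      rw [flat2]
      rw [show ((2 * Real.pi * quadSum n a : ℝ) : ℂ)
          = ∑ j ∈ range n, ∑ k ∈ range n, ∑ l ∈ range n, ∑ m ∈ range n,
            (((2 * Real.pi) * (if j + l = k + m then a j * a k * a l * a m else 0) : ℝ) : ℂ) from by
        rw [quadSum]
        push_cast [Finset.mul_sum]
        ring]
    have hR := intervalIntegral.integral_ofReal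
      (f := fun θ : ℝ => (‖∑ j ∈ Finset.range n, (a j : ℂ) * Complex.exp ((θ : ℂ) * Complex.I) ^ j‖) ^ 4)
      (a := (0:ℝ)) (b := 2 * Real.pi) (μ := volume)
    rw [hR] at hC
    exact_mod_cast hC
  unfold L4pow4
  rw [key]
  have hπ : (Real.pi : ℝ) ≠ 0 := Real.pi_ne_zero
  field_simp

lemma cast_div2 (t : ℕ) : ((t / 2 : ℕ) : ℝ) = (2 * t - 1 + (-1 : ℝ)^t) / 4 := by
  rcases Nat.even_or_odd t with ⟨k, hk⟩ | ⟨k, hk⟩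
  · subst hk
    rw [show (k + k) / 2 = k by omega, Even.neg_one_pow ⟨k, rfl⟩]
    push_cast; ring
  · subst hk
    rw [show (2 * k + 1) / 2 = k by omega, Odd.neg_one_pow ⟨k, rfl⟩]
    push_cast; ring

lemma geom_neg1 (m : ℕ) : (∑ i ∈ range m, (-1 : ℝ)^i) = (1 - (-1 : ℝ)^m) / 2 := by
  induction m with
  | zero => simp
  | succ m ih => rw [Finset.sum_range_succ, ih, pow_succ]; ring

lemma gauss_sum (m : ℕ) : (∑ i ∈ range m, (i : ℝ)) = m * (m - 1) / 2 := by
  induction m with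
  | zero => simp
  | succ m ih => rw [Finset.sum_range_succ, ih]; push_cast; ring

lemma sq_sum (m : ℕ) : (∑ i ∈ range m, (i : ℝ)^2) = m * (m - 1) * (2 * m - 1) / 6 := by
  induction m with
  | zero => simp
  | succ m ih => rw [Finset.sum_range_succ, ih]; push_cast; ring

lemma cnt_le (n m : ℕ) (hm : m < n) :
    (∑ d ∈ Ico 1 n, if d ≤ m then (1:ℝ) else 0) = (m : ℝ) := by
  rw [Finset.sum_ite, Finset.sum_const_zero, add_zero, Finset.sum_const]
  rw [show (Ico 1 n).filter (fun d => d ≤ m) = Ico 1 (m+1) by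
    ext d; simp only [mem_filter, mem_Ico]; omega]
  rw [Nat.card_Ico, nsmul_eq_mul, mul_one]
  push_cast [show m + 1 - 1 = m from rfl]
  ring

lemma H1 (n : ℕ) (hn : 1 ≤ n) : ∀ m ≤ n,
    (∑ d ∈ Ico 1 n, ((m - d : ℕ) : ℝ)) = (m : ℝ) * ((m : ℝ) - 1) / 2 := by
  intro m
  induction m with
  | zero => intro _; simp
  | succ m ih =>
    intro hm1
    have step : ∀ d ∈ Ico 1 n, ((m + 1 - d : ℕ) : ℝ)
        = ((m - d : ℕ) : ℝ) + (if d ≤ m then (1:ℝ) else 0) := by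
      intro d hd
      rcases le_or_gt d m with h | h
      · rw [if_pos h, show m + 1 - d = (m - d) + 1 by omega]; push_cast; ring
      · rw [if_neg (by omega), show m + 1 - d = 0 by omega, show m - d = 0 by omega]
        simp
    rw [Finset.sum_congr rfl step, Finset.sum_add_distrib, ih (by omega), cnt_le n m (by omega)]
    push_cast
    ring

lemma H2 (n : ℕ) (hn : 1 ≤ n) : ∀ m ≤ n,
    (∑ d ∈ Ico 1 n, ((m - d : ℕ) : ℝ)^2)
      = (m : ℝ) * ((m : ℝ) - 1) * (2 * (m : ℝ) - 1) / 6 := by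
  intro m
  induction m with
  | zero => intro _; simp
  | succ m ih =>
    intro hm1
    have step : ∀ d ∈ Ico 1 n, ((m + 1 - d : ℕ) : ℝ)^2
        = ((m - d : ℕ) : ℝ)^2 + (2 * ((m - d : ℕ) : ℝ) + (if d ≤ m then (1:ℝ) else 0)) := by
      intro d hd
      rcases le_or_gt d m with h | h
      · rw [if_pos h, show m + 1 - d = (m - d) + 1 by omega]; push_cast; ring
      · rw [if_neg (by omega), show m + 1 - d = 0 by omega, show m - d = 0 by omega]
        simp
    rw [Finset.sum_congr rfl step, Finset.sum_add_distrib, ih (by omega),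
      Finset.sum_add_distrib, ← Finset.mul_sum, H1 n hn m (by omega), cnt_le n m (by omega)]
    push_cast
    ring

lemma cnt_2le (n m : ℕ) (hn : 1 ≤ n) (hm : m ≤ n) :
    (∑ d ∈ Ico 1 n, if 2 * d ≤ m then (1:ℝ) else 0) = ((m / 2 : ℕ) : ℝ) := by
  rw [Finset.sum_ite, Finset.sum_const_zero, add_zero, Finset.sum_const]
  rw [show (Ico 1 n).filter (fun d => 2 * d ≤ m) = Ico 1 (m / 2 + 1) by
    ext d; simp only [mem_filter, mem_Ico]; omega]
  rw [Nat.card_Ico, nsmul_eq_mul, mul_one]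
  push_cast [show m / 2 + 1 - 1 = m / 2 from rfl]
  ring

lemma H4 (n : ℕ) (hn : 1 ≤ n) : ∀ m ≤ n,
    (∑ d ∈ Ico 1 n, ((m - 2 * d : ℕ) : ℝ)) = ∑ t ∈ range m, ((t / 2 : ℕ) : ℝ) := by
  intro m
  induction m with
  | zero => intro _; simp
  | succ m ih =>
    intro hm1
    have step : ∀ d ∈ Ico 1 n, ((m + 1 - 2 * d : ℕ) : ℝ)
        = ((m - 2 * d : ℕ) : ℝ) + (if 2 * d ≤ m then (1:ℝ) else 0) := by
      intro d hd
      rcases le_or_gt (2 * d) m with h | h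
      · rw [if_pos h, show m + 1 - 2 * d = (m - 2 * d) + 1 by omega]; push_cast; ring
      · rw [if_neg (by omega), show m + 1 - 2 * d = 0 by omega, show m - 2 * d = 0 by omega]
        simp
    rw [Finset.sum_congr rfl step, Finset.sum_add_distrib, ih (by omega),
      cnt_2le n m hn (by omega), Finset.sum_range_succ]

lemma G4 (n : ℕ) (hn : 1 ≤ n) :
    (∑ d ∈ Ico 1 n, ((n - 2 * d : ℕ) : ℝ))
      = ((n:ℝ)^2 - 2 * n) / 4 + (1 - (-1:ℝ)^n) / 8 := by
  rw [H4 n hn n le_rfl]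
  rw [Finset.sum_congr rfl fun t _ => cast_div2 t]
  have expand : (∑ t ∈ range n, (2 * (t:ℝ) - 1 + (-1 : ℝ)^t) / 4)
      = (2 * (∑ t ∈ range n, (t:ℝ)) - n + (∑ t ∈ range n, (-1:ℝ)^t)) / 4 := by
    have hpt : ∀ t ∈ range n, (2 * (t:ℝ) - 1 + (-1 : ℝ)^t) / 4
        = 2 / 4 * (t:ℝ) + (-1/4) + (1/4) * (-1:ℝ)^t := fun t _ => by ring
    rw [Finset.sum_congr rfl hpt]
    simp only [Finset.sum_add_distrib, ← Finset.mul_sum, Finset.sum_const, card_range,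
      nsmul_eq_mul]
    ring
  rw [expand, gauss_sum, geom_neg1]
  push_cast
  ring

lemma acorr_zero (n : ℕ) (a : Fin n → Bool) : acorr n 0 (signs n a) = (n : ℝ) := by
  unfold acorr
  rw [Nat.sub_zero]
  rw [Finset.sum_congr rfl (fun j hj => ?_), Finset.sum_const, card_range, nsmul_eq_mul, mul_one]
  show signs n a j * signs n a (j + 0) = 1
  simp only [mem_range] at hj
  rw [Nat.add_zero]
  unfold signs
  rw [dif_pos hj]
  split_ifs <;> norm_num

/-- For `f` drawn uniformly at random from the Littlewood polynomials of length `n`,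
`Var(‖f‖₄⁴) = (16/3)n³ - 20n² + (56/3)n - 2 + 2(-1)ⁿ`. -/
theorem stmt_13 (n : ℕ) (hn : 1 < n) :
    (1 / 2 ^ n : ℝ) * ∑ a : Fin n → Bool,
        (L4pow4 n (signs n a) -
          (1 / 2 ^ n : ℝ) * ∑ b : Fin n → Bool, L4pow4 n (signs n b)) ^ 2 =
      (16 / 3) * (n : ℝ) ^ 3 - 20 * n ^ 2 + (56 / 3) * n - 2 + 2 * (-1 : ℝ) ^ n := by
  have hn1 : 1 ≤ n := by omega
  have hc : ((2:ℝ))^n ≠ 0 := by positivity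
  have hcard : (Finset.univ : Finset (Fin n → Bool)).card = 2^n := by
    simp [Finset.card_univ]
  -- X = n² + 2 S
  have hX : ∀ a : Fin n → Bool, L4pow4 n (signs n a)
      = (n:ℝ)^2 + 2 * ∑ d ∈ Ico 1 n, (acorr n d (signs n a))^2 := by
    intro a
    rw [L4pow4_eq_quadSum, quadSum_eq n (by omega) _, acorr_zero]
  simp only [hX]
  set S : (Fin n → Bool) → ℝ := fun a => ∑ d ∈ Ico 1 n, (acorr n d (signs n a))^2 with hS
  set SumL : ℝ := ∑ d ∈ Ico 1 n, ((n - d : ℕ) : ℝ) with hSumL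
  have hS1 : ∑ a : Fin n → Bool, S a = 2^n * SumL := by
    rw [hS, Finset.sum_comm, hSumL, Finset.mul_sum]
    exact Finset.sum_congr rfl fun d hd => by
      simp only [mem_Ico] at hd
      exact moment1 n d hd.1 hd.2
  set BigW : ℝ := (∑ d ∈ Ico 1 n, ∑ e ∈ Ico 1 n,
      (((n - d : ℕ) : ℝ) * ((n - e : ℕ) : ℝ) + 4 * ((n - d - e : ℕ) : ℝ)))
    + ∑ d ∈ Ico 1 n, (2 * ((n - d : ℕ) : ℝ)^2 - 2 * ((n - d : ℕ) : ℝ)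
        - 4 * ((n - 2 * d : ℕ) : ℝ)) with hBigW
  have hS2 : ∑ a : Fin n → Bool, (S a)^2 = 2^n * BigW := by
    have expand : ∀ a : Fin n → Bool, (S a)^2
        = ∑ d ∈ Ico 1 n, ∑ e ∈ Ico 1 n,
            (acorr n d (signs n a))^2 * (acorr n e (signs n a))^2 := by
      intro a
      rw [hS, sq, Finset.sum_mul_sum]
    rw [Finset.sum_congr rfl fun a _ => expand a]
    rw [Finset.sum_comm]
    have hinner : ∀ d ∈ Ico 1 n,
        (∑ a : Fin n → Bool, ∑ e ∈ Ico 1 n,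
          (acorr n d (signs n a))^2 * (acorr n e (signs n a))^2)
        = ∑ e ∈ Ico 1 n, (2:ℝ)^n * ((((n - d : ℕ) : ℝ) * ((n - e : ℕ) : ℝ)
            + 4 * ((n - d - e : ℕ) : ℝ))
            + (if d = e then 2 * ((n - d : ℕ) : ℝ)^2 - 2 * ((n - d : ℕ) : ℝ)
                - 4 * ((n - 2 * d : ℕ) : ℝ) else 0)) := by
      intro d hd
      simp only [mem_Ico] at hd
      rw [Finset.sum_comm]
      refine Finset.sum_congr rfl fun e he => ?_
      simp only [mem_Ico] at he
      by_cases hde : d = e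
      · subst hde
        rw [if_pos rfl, moment2_eq n d hd.1 hd.2,
          show (n - d - d : ℕ) = (n - 2 * d : ℕ) by omega]
        ring
      · rw [if_neg hde, moment2_ne n d e hd.1 hd.2 he.1 he.2 hde]
        ring
    rw [Finset.sum_congr rfl hinner]
    simp only [← Finset.mul_sum]
    congr 1
    rw [hBigW]
    simp only [Finset.sum_add_distrib]
    congr 1
    refine Finset.sum_congr rfl fun d hd => ?_
    rw [Finset.sum_ite_eq (Ico 1 n) d
      (fun _ => 2 * ((n - d : ℕ) : ℝ)^2 - 2 * ((n - d : ℕ) : ℝ) - 4 * ((n - 2 * d : ℕ) : ℝ))]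
    rw [if_pos hd]
  -- mean
  have hmean : (1 / 2 ^ n : ℝ) * ∑ b : Fin n → Bool, ((n:ℝ)^2 + 2 * S b)
      = (n:ℝ)^2 + 2 * SumL := by
    rw [Finset.sum_add_distrib, Finset.sum_const, hcard, ← Finset.mul_sum, hS1]
    push_cast
    field_simp
    ring
  rw [hmean]
  -- variance expansion
  have hpt : ∀ a : Fin n → Bool,
      ((n:ℝ)^2 + 2 * S a - ((n:ℝ)^2 + 2 * SumL))^2
      = 4 * (S a)^2 - 8 * SumL * S a + 4 * SumL^2 := by
    intro a; ring
  rw [Finset.sum_congr rfl fun a _ => hpt a]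
  rw [Finset.sum_add_distrib, Finset.sum_sub_distrib, ← Finset.mul_sum, ← Finset.mul_sum,
    Finset.sum_const, hcard, hS1, hS2]
  -- now pure scalar computation
  have hLval : SumL = (n:ℝ) * ((n:ℝ) - 1) / 2 := by
    rw [hSumL]; exact H1 n hn1 n le_rfl
  have hG2 : (∑ d ∈ Ico 1 n, ((n - d : ℕ) : ℝ)^2)
      = (n:ℝ) * ((n:ℝ) - 1) * (2 * (n:ℝ) - 1) / 6 := H2 n hn1 n le_rfl
  have hG3 : (∑ d ∈ Ico 1 n, ∑ e ∈ Ico 1 n, ((n - d - e : ℕ) : ℝ))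
      = (n:ℝ) * ((n:ℝ) - 1) * ((n:ℝ) - 2) / 6 := by
    rw [Finset.sum_congr rfl fun d _ => H1 n hn1 (n - d) (Nat.sub_le n d)]
    have hpt2 : ∀ d ∈ Ico 1 n, ((n - d : ℕ) : ℝ) * (((n - d : ℕ) : ℝ) - 1) / 2
        = (1/2) * ((n - d : ℕ) : ℝ)^2 - (1/2) * ((n - d : ℕ) : ℝ) := fun d _ => by ring
    rw [Finset.sum_congr rfl hpt2, Finset.sum_sub_distrib, ← Finset.mul_sum, ← Finset.mul_sum,
      hG2, show (∑ i ∈ Ico 1 n, ((n - i : ℕ) : ℝ)) = (n:ℝ) * ((n:ℝ) - 1) / 2 from H1 n hn1 n le_rfl]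
    ring
  have hBigWval : BigW = SumL^2 + 4 * ((n:ℝ) * ((n:ℝ) - 1) * ((n:ℝ) - 2) / 6)
      + (2 * ((n:ℝ) * ((n:ℝ) - 1) * (2 * (n:ℝ) - 1) / 6) - 2 * ((n:ℝ) * ((n:ℝ) - 1) / 2)
        - 4 * (((n:ℝ)^2 - 2 * n) / 4 + (1 - (-1:ℝ)^n) / 8)) := by
    rw [hBigW]
    have hsplit : (∑ d ∈ Ico 1 n, ∑ e ∈ Ico 1 n,
        (((n - d : ℕ) : ℝ) * ((n - e : ℕ) : ℝ) + 4 * ((n - d - e : ℕ) : ℝ)))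
        = SumL^2 + 4 * (∑ d ∈ Ico 1 n, ∑ e ∈ Ico 1 n, ((n - d - e : ℕ) : ℝ)) := by
      simp only [Finset.sum_add_distrib, ← Finset.mul_sum]
      congr 1
      rw [hSumL, sq, Finset.sum_mul_sum]
      exact Finset.sum_congr rfl fun i _ => Finset.mul_sum _ _ _
    rw [hsplit, hG3]
    have hsplit2 : (∑ d ∈ Ico 1 n, (2 * ((n - d : ℕ) : ℝ)^2 - 2 * ((n - d : ℕ) : ℝ)
          - 4 * ((n - 2 * d : ℕ) : ℝ)))
        = 2 * (∑ d ∈ Ico 1 n, ((n - d : ℕ) : ℝ)^2) - 2 * SumL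
          - 4 * (∑ d ∈ Ico 1 n, ((n - 2 * d : ℕ) : ℝ)) := by
      simp only [Finset.sum_sub_distrib, ← Finset.mul_sum]
      try rw [hSumL]
    rw [hsplit2, hG2, G4 n hn1, hLval]
    try ring
  rw [hBigWval, hLval]
  push_cast
  field_simp
  ring
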